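/- Let n ≥ 1 and 20n ≤ m < 2^{n/2} be integers. Every approximate majority cover that solves XOR-Missing-String(n,m) with error at most 2^{−5n} has size greater than 2^{m/2}. -/

import Mathlib

open Finset

lemma dcount {α : Type*} [Fintype α] {N : ℕ} (q : Fin N → α → Prop) [∀ t a, Decidable (q t a)] :
    ∑ a : α, (Finset.univ.filter fun t => q t a).card
      = ∑ t : Fin N, (Finset.univ.filter fun a => q t a).card := by
  simp only [Finset.card_filter]
  exact Finset.sum_comm

lemma spread (n m : ℕ) (hn2 : 2 ≤ n) (hm4 : 4 < m)
    (𝒳 : Finset (Fin m → Fin n → Bool))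
    (hD : (2:ℝ) ^ ((n*m : ℕ) : ℝ) * (2:ℝ) ^ (-(m:ℝ)/2 - 1) ≤ (𝒳.card : ℝ)) :
    (2:ℕ)^(n-1) <
      (Finset.univ.filter fun v : Fin n → Bool =>
        (2:ℝ) ^ (1 - 5*(n:ℝ)/2) * (𝒳.card : ℝ) ≤ ((𝒳.filter fun X => ∃ i, X i = v).card : ℝ)).card := by
  classical
  by_contra hP
  push_neg at hP
  set θ : ℝ := (2:ℝ) ^ (1 - 5*(n:ℝ)/2) with hθ
  set P : Finset (Fin n → Bool) := (Finset.univ.filter fun v : Fin n → Bool =>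
      θ * (𝒳.card : ℝ) ≤ ((𝒳.filter fun X => ∃ i, X i = v).card : ℝ)) with hPdef
  -- split 𝒳
  have hsplit : (𝒳.filter fun X => ∀ i, X i ∈ P).card
      + (𝒳.filter fun X => ¬ ∀ i, X i ∈ P).card = 𝒳.card :=
    Finset.card_filter_add_card_filter_not _
  -- part 1
  have h1 : (𝒳.filter fun X => ∀ i, X i ∈ P).card ≤ 2^((n-1)*m) := by
    calc (𝒳.filter fun X => ∀ i, X i ∈ P).card
        ≤ (Fintype.piFinset fun _ : Fin m => P).card := by
          apply Finset.card_le_card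
          intro X hX
          rw [Fintype.mem_piFinset]
          exact (Finset.mem_filter.mp hX).2
      _ = P.card ^ m := by
          rw [Fintype.card_piFinset]
          simp
      _ ≤ (2^(n-1)) ^ m := Nat.pow_le_pow_left hP m
      _ = 2^((n-1)*m) := by rw [← pow_mul]
  -- part 2
  have h2 : ((𝒳.filter fun X => ¬ ∀ i, X i ∈ P).card : ℝ) ≤ (2:ℝ)^(n:ℝ) * (θ * 𝒳.card) := by
    have hsub : (𝒳.filter fun X => ¬ ∀ i, X i ∈ P)
        ⊆ (Finset.univ \ P).biUnion (fun v => 𝒳.filter fun X => ∃ i, X i = v) := by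
      intro X hX
      obtain ⟨hX𝒳, hXbad⟩ := Finset.mem_filter.mp hX
      push_neg at hXbad
      obtain ⟨i, hi⟩ := hXbad
      apply Finset.mem_biUnion.mpr
      exact ⟨X i, by simpa using hi, Finset.mem_filter.mpr ⟨hX𝒳, i, rfl⟩⟩
    have hcard := Finset.card_le_card hsub
    have hbu := Finset.card_biUnion_le (s := Finset.univ \ P)
      (t := fun v => 𝒳.filter fun X => ∃ i, X i = v)
    have hterm : ∀ v ∈ Finset.univ \ P,
        ((𝒳.filter fun X => ∃ i, X i = v).card : ℝ) ≤ θ * 𝒳.card := by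
      intro v hv
      have : v ∉ P := (Finset.mem_sdiff.mp hv).2
      rw [hPdef] at this
      simp only [Finset.mem_filter, Finset.mem_univ, true_and, not_le] at this
      exact this.le
    calc ((𝒳.filter fun X => ¬ ∀ i, X i ∈ P).card : ℝ)
        ≤ (((Finset.univ \ P).biUnion (fun v => 𝒳.filter fun X => ∃ i, X i = v)).card : ℝ) := by
          exact_mod_cast hcard
      _ ≤ ∑ v ∈ Finset.univ \ P, ((𝒳.filter fun X => ∃ i, X i = v).card : ℝ) := by
          exact_mod_cast hbu
      _ ≤ ∑ v ∈ Finset.univ \ P, θ * 𝒳.card := Finset.sum_le_sum hterm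
      _ = ((Finset.univ \ P).card : ℝ) * (θ * 𝒳.card) := by
          rw [Finset.sum_const, nsmul_eq_mul]
      _ ≤ (2:ℝ)^(n:ℝ) * (θ * 𝒳.card) := by
          apply mul_le_mul_of_nonneg_right
          · have hle : (Finset.univ \ P).card ≤ 2^n := by
              calc (Finset.univ \ P).card ≤ (Finset.univ : Finset (Fin n → Bool)).card :=
                    Finset.card_le_card (Finset.sdiff_subset)
                _ = 2^n := by simp [Finset.card_univ]
            calc ((Finset.univ \ P).card : ℝ) ≤ ((2^n : ℕ) : ℝ) := by exact_mod_cast hle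
              _ = (2:ℝ)^(n:ℝ) := by
                  push_cast; exact (Real.rpow_natCast 2 n).symm
          · positivity
  have hθn : (2:ℝ)^(n:ℝ) * θ ≤ 1/2 := by
    rw [hθ, ← Real.rpow_add two_pos]
    have hncast : (2:ℝ) ≤ (n:ℝ) := by exact_mod_cast hn2
    have hexp : (n:ℝ) + (1 - 5*(n:ℝ)/2) ≤ (-1:ℝ) := by linarith
    calc (2:ℝ)^((n:ℝ)+(1-5*(n:ℝ)/2)) ≤ (2:ℝ)^(-1:ℝ) :=
        Real.rpow_le_rpow_of_exponent_le one_le_two hexp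
      _ = 1/2 := by
          rw [Real.rpow_neg_one]; norm_num
  have hcard2 : (𝒳.card : ℝ) ≤ 2 * (2:ℝ)^(((n-1)*m : ℕ) : ℝ) := by
    have e1 : ((𝒳.filter fun X => ∀ i, X i ∈ P).card : ℝ) ≤ (2:ℝ)^(((n-1)*m : ℕ):ℝ) := by
      rw [Real.rpow_natCast]
      exact_mod_cast h1
    have e2 : ((𝒳.filter fun X => ¬ ∀ i, X i ∈ P).card : ℝ) ≤ (𝒳.card:ℝ)/2 := by
      calc ((𝒳.filter fun X => ¬ ∀ i, X i ∈ P).card : ℝ)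
          ≤ (2:ℝ)^(n:ℝ) * (θ * 𝒳.card) := h2
        _ = ((2:ℝ)^(n:ℝ) * θ) * 𝒳.card := by ring
        _ ≤ (1/2) * 𝒳.card := mul_le_mul_of_nonneg_right hθn (by positivity)
        _ = (𝒳.card:ℝ)/2 := by ring
    have hcast : ((𝒳.filter fun X => ∀ i, X i ∈ P).card : ℝ)
        + ((𝒳.filter fun X => ¬ ∀ i, X i ∈ P).card : ℝ) = (𝒳.card : ℝ) := by
      exact_mod_cast hsplit
    linarith
  have hlt : 2 * (2:ℝ)^(((n-1)*m : ℕ) : ℝ) < (2:ℝ)^((n*m:ℕ):ℝ) * (2:ℝ)^(-(m:ℝ)/2 - 1) := by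
    rw [← Real.rpow_add two_pos]
    have h2eq : 2 * (2:ℝ)^(((n-1)*m:ℕ):ℝ) = (2:ℝ)^((((n-1)*m:ℕ):ℝ)+1) := by
      rw [Real.rpow_add two_pos, Real.rpow_one]; ring
    rw [h2eq]
    apply Real.rpow_lt_rpow_of_exponent_lt one_lt_two
    have h1n : 1 ≤ n := le_trans one_le_two hn2
    have hc : (((n-1)*m:ℕ):ℝ) = ((n:ℝ)-1)*m := by
      push_cast [h1n]
      ring
    rw [hc]; push_cast
    have hm4' : (4:ℝ) < m := by exact_mod_cast hm4
    linarith
  linarith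

set_option maxHeartbeats 2000000

/-- Any approximate majority cover (a finite family of labeled rectangles, indexed by `Fin N`)
that solves `XOR-Missing-String(n,m)` with error at most `2^{-5n}` has size greater than
`2^{m/2}`.  Here a labeled rectangle is a pair of Finsets (Alice's side and Bob's side) together
with an `n`-bit label; the cover solves the problem with error `ε` if every instance is covered
and, among the rectangles containing a given instance, at least a `(1-ε)` fraction carry a label
that is a solution (i.e. differs from every `X i ⊕ Y j`). -/
theorem stmt5 (n m : ℕ) (hn : 1 ≤ n) (hm : 20 * n ≤ m)
    (hm2 : (m : ℝ) < (2 : ℝ) ^ ((n : ℝ) / 2))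
    (N : ℕ)
    (A : Fin N → (Finset (Fin m → Fin n → Bool) × Finset (Fin m → Fin n → Bool)) ×
      (Fin n → Bool))
    (hcover : ∀ X Y : Fin m → Fin n → Bool, ∃ t : Fin N, X ∈ (A t).1.1 ∧ Y ∈ (A t).1.2)
    (herr : ∀ X Y : Fin m → Fin n → Bool,
      (1 - ((2 : ℝ) ^ (5 * n))⁻¹) *
          ((Finset.univ.filter (fun t : Fin N => X ∈ (A t).1.1 ∧ Y ∈ (A t).1.2)).card : ℝ) ≤
        ((Finset.univ.filter (fun t : Fin N => (X ∈ (A t).1.1 ∧ Y ∈ (A t).1.2) ∧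
            ∀ i j : Fin m, (A t).2 ≠ fun u => Bool.xor (X i u) (Y j u))).card : ℝ)) :
    (2 : ℝ) ^ ((m : ℝ) / 2) < (N : ℝ) := by
  -- n ≥ 2
  have hn2 : 2 ≤ n := by
    by_contra hcon
    have hn1 : n = 1 := by omega
    subst hn1
    have h2le : (2:ℝ) ^ (((1:ℕ):ℝ)/2) ≤ 2 := by
      calc (2:ℝ) ^ (((1:ℕ):ℝ)/2) ≤ (2:ℝ) ^ (1:ℝ) :=
          Real.rpow_le_rpow_of_exponent_le one_le_two (by norm_num)
        _ = 2 := Real.rpow_one 2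
    have hm20 : (20:ℝ) ≤ (m:ℝ) := by exact_mod_cast hm
    linarith
  have hm4 : 4 < m := by omega
  -- abbreviations
  set ε : ℝ := ((2:ℝ)^(5*n))⁻¹ with hεdef
  have hε_pos : 0 < ε := by positivity
  set θ : ℝ := (2:ℝ) ^ (1 - 5*(n:ℝ)/2) with hθdef
  have hθ_pos : 0 < θ := Real.rpow_pos_of_pos two_pos _
  have hθsq : θ * θ = 4 * ε := by
    rw [hθdef, ← Real.rpow_add two_pos, hεdef]
    rw [← Real.rpow_natCast 2 (5*n), ← Real.rpow_neg (le_of_lt two_pos)]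
    have hexp : (1 - 5*(n:ℝ)/2) + (1 - 5*(n:ℝ)/2) = 2 + (-(((5*n:ℕ)):ℝ)) := by
      push_cast; ring
    rw [hexp, Real.rpow_add two_pos]
    have h22 : (2:ℝ)^(2:ℝ) = 4 := by
      rw [show (2:ℝ) = ((2:ℕ):ℝ) by norm_num, Real.rpow_natCast]; norm_num
    rw [h22]
  set K : ℝ := (2:ℝ) ^ ((n*m : ℕ) : ℝ) with hKdef
  have hK_pos : 0 < K := Real.rpow_pos_of_pos two_pos _
  set D : ℝ := K * (2:ℝ)^(-(m:ℝ)/2 - 1) with hDdef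
  have hD_pos : 0 < D := by positivity
  have cardT : Fintype.card (Fin m → Fin n → Bool) = 2^(n*m) := by
    calc Fintype.card (Fin m → Fin n → Bool) = (2^n)^m := by simp
      _ = 2^(n*m) := (pow_mul 2 n m).symm
  have hKcast : K = ((2^(n*m) : ℕ) : ℝ) := by
    rw [hKdef, Real.rpow_natCast]; push_cast; ring
  -- rectangle cards
  have hrect : ∀ t : Fin N,
      (Finset.univ.filter fun p : (Fin m → Fin n → Bool) × (Fin m → Fin n → Bool) =>
        p.1 ∈ (A t).1.1 ∧ p.2 ∈ (A t).1.2).card = (A t).1.1.card * (A t).1.2.card := by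
    intro t
    rw [← Finset.card_product]
    congr 1
    ext p
    simp [Finset.mem_product]
  -- Step A : coverage
  have hcoverA : K * K ≤ ∑ t : Fin N, ((A t).1.1.card : ℝ) * ((A t).1.2.card : ℝ) := by
    have hone : ∀ p : (Fin m → Fin n → Bool) × (Fin m → Fin n → Bool),
        1 ≤ (Finset.univ.filter fun t : Fin N => p.1 ∈ (A t).1.1 ∧ p.2 ∈ (A t).1.2).card := by
      intro p
      obtain ⟨t, ht⟩ := hcover p.1 p.2
      exact Finset.card_pos.mpr ⟨t, Finset.mem_filter.mpr ⟨Finset.mem_univ _, ht⟩⟩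
    have hnat : 2^(n*m) * 2^(n*m) ≤ ∑ t : Fin N, (A t).1.1.card * (A t).1.2.card := by
      calc 2^(n*m) * 2^(n*m)
          = Fintype.card ((Fin m → Fin n → Bool) × (Fin m → Fin n → Bool)) := by
            rw [Fintype.card_prod, cardT]
        _ = ∑ _p : (Fin m → Fin n → Bool) × (Fin m → Fin n → Bool), 1 := by
            rw [Finset.sum_const, smul_eq_mul, mul_one, Finset.card_univ]
        _ ≤ ∑ p : (Fin m → Fin n → Bool) × (Fin m → Fin n → Bool),
              (Finset.univ.filter fun t : Fin N => p.1 ∈ (A t).1.1 ∧ p.2 ∈ (A t).1.2).card :=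
            Finset.sum_le_sum (fun p _ => hone p)
        _ = ∑ t : Fin N,
              (Finset.univ.filter fun p : (Fin m → Fin n → Bool) × (Fin m → Fin n → Bool) =>
                p.1 ∈ (A t).1.1 ∧ p.2 ∈ (A t).1.2).card := dcount _
        _ = ∑ t : Fin N, (A t).1.1.card * (A t).1.2.card :=
            Finset.sum_congr rfl (fun t _ => hrect t)
    calc K * K = ((2^(n*m) * 2^(n*m) : ℕ) : ℝ) := by rw [hKcast]; push_cast; ring
      _ ≤ ((∑ t : Fin N, (A t).1.1.card * (A t).1.2.card : ℕ) : ℝ) := by exact_mod_cast hnat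
      _ = ∑ t : Fin N, ((A t).1.1.card : ℝ) * ((A t).1.2.card : ℝ) := by push_cast; ring
  -- abbreviation lemmas for double counting
  have hd_cov :
      (∑ p : (Fin m → Fin n → Bool) × (Fin m → Fin n → Bool),
        (Finset.univ.filter fun t : Fin N =>
          p.1 ∈ (A t).1.1 ∧ p.2 ∈ (A t).1.2).card)
      = ∑ t : Fin N,
        (Finset.univ.filter fun p : (Fin m → Fin n → Bool) × (Fin m → Fin n → Bool) =>
          p.1 ∈ (A t).1.1 ∧ p.2 ∈ (A t).1.2).card := dcount _
  have hd_bad :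
      (∑ p : (Fin m → Fin n → Bool) × (Fin m → Fin n → Bool),
        (Finset.univ.filter fun t : Fin N =>
          (p.1 ∈ (A t).1.1 ∧ p.2 ∈ (A t).1.2) ∧
            ¬ ∀ i j : Fin m, (A t).2 ≠ fun u => Bool.xor (p.1 i u) (p.2 j u)).card)
      = ∑ t : Fin N,
        (Finset.univ.filter fun p : (Fin m → Fin n → Bool) × (Fin m → Fin n → Bool) =>
          (p.1 ∈ (A t).1.1 ∧ p.2 ∈ (A t).1.2) ∧
            ¬ ∀ i j : Fin m, (A t).2 ≠ fun u => Bool.xor (p.1 i u) (p.2 j u)).card :=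
    dcount (fun (t : Fin N) (p : (Fin m → Fin n → Bool) × (Fin m → Fin n → Bool)) =>
      (p.1 ∈ (A t).1.1 ∧ p.2 ∈ (A t).1.2) ∧
        ¬ ∀ i j : Fin m, (A t).2 ≠ fun u => Bool.xor (p.1 i u) (p.2 j u))
  have hcovR : ∑ p : (Fin m → Fin n → Bool) × (Fin m → Fin n → Bool),
      ((Finset.univ.filter fun t : Fin N =>
        p.1 ∈ (A t).1.1 ∧ p.2 ∈ (A t).1.2).card : ℝ)
      = ∑ t : Fin N, ((A t).1.1.card : ℝ) * ((A t).1.2.card : ℝ) := by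
    have h1 := congrArg (fun k : ℕ => (k : ℝ)) hd_cov
    push_cast at h1
    rw [h1]
    refine Finset.sum_congr rfl (fun t _ => ?_)
    rw [hrect t]
    push_cast; ring
  -- Step B : total error bound
  have hbadsum : ∑ t : Fin N,
      ((Finset.univ.filter fun p : (Fin m → Fin n → Bool) × (Fin m → Fin n → Bool) =>
        (p.1 ∈ (A t).1.1 ∧ p.2 ∈ (A t).1.2) ∧
          ¬ ∀ i j : Fin m, (A t).2 ≠ fun u => Bool.xor (p.1 i u) (p.2 j u)).card : ℝ)
      ≤ ε * ∑ t : Fin N, ((A t).1.1.card : ℝ) * ((A t).1.2.card : ℝ) := by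
    have hpt : ∀ p : (Fin m → Fin n → Bool) × (Fin m → Fin n → Bool),
        ((Finset.univ.filter fun t : Fin N =>
          (p.1 ∈ (A t).1.1 ∧ p.2 ∈ (A t).1.2) ∧
            ¬ ∀ i j : Fin m, (A t).2 ≠ fun u => Bool.xor (p.1 i u) (p.2 j u)).card : ℝ)
        ≤ ε * ((Finset.univ.filter fun t : Fin N =>
            p.1 ∈ (A t).1.1 ∧ p.2 ∈ (A t).1.2).card : ℝ) := by
      intro p
      have hsplit :
          (Finset.univ.filter fun t : Fin N =>
            (p.1 ∈ (A t).1.1 ∧ p.2 ∈ (A t).1.2) ∧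
              ∀ i j : Fin m, (A t).2 ≠ fun u => Bool.xor (p.1 i u) (p.2 j u)).card
          + (Finset.univ.filter fun t : Fin N =>
            (p.1 ∈ (A t).1.1 ∧ p.2 ∈ (A t).1.2) ∧
              ¬ ∀ i j : Fin m, (A t).2 ≠ fun u => Bool.xor (p.1 i u) (p.2 j u)).card
          = (Finset.univ.filter fun t : Fin N =>
              p.1 ∈ (A t).1.1 ∧ p.2 ∈ (A t).1.2).card := by
        have base := Finset.card_filter_add_card_filter_not
          (s := Finset.univ.filter fun t : Fin N => p.1 ∈ (A t).1.1 ∧ p.2 ∈ (A t).1.2)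
          (p := fun t => ∀ i j : Fin m, (A t).2 ≠ fun u => Bool.xor (p.1 i u) (p.2 j u))
        rw [Finset.filter_filter, Finset.filter_filter] at base
        exact base
      have herr' := herr p.1 p.2
      have hsplitR :
          ((Finset.univ.filter fun t : Fin N =>
            (p.1 ∈ (A t).1.1 ∧ p.2 ∈ (A t).1.2) ∧
              ∀ i j : Fin m, (A t).2 ≠ fun u => Bool.xor (p.1 i u) (p.2 j u)).card : ℝ)
          + ((Finset.univ.filter fun t : Fin N =>
            (p.1 ∈ (A t).1.1 ∧ p.2 ∈ (A t).1.2) ∧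
              ¬ ∀ i j : Fin m, (A t).2 ≠ fun u => Bool.xor (p.1 i u) (p.2 j u)).card : ℝ)
          = ((Finset.univ.filter fun t : Fin N =>
              p.1 ∈ (A t).1.1 ∧ p.2 ∈ (A t).1.2).card : ℝ) := by
        exact_mod_cast hsplit
      linarith
    have h2 := congrArg (fun k : ℕ => (k : ℝ)) hd_bad
    push_cast at h2
    rw [← h2]
    calc ∑ p : (Fin m → Fin n → Bool) × (Fin m → Fin n → Bool),
        ((Finset.univ.filter fun t : Fin N =>
          (p.1 ∈ (A t).1.1 ∧ p.2 ∈ (A t).1.2) ∧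
            ¬ ∀ i j : Fin m, (A t).2 ≠ fun u => Bool.xor (p.1 i u) (p.2 j u)).card : ℝ)
        ≤ ∑ p : (Fin m → Fin n → Bool) × (Fin m → Fin n → Bool),
            ε * ((Finset.univ.filter fun t : Fin N =>
              p.1 ∈ (A t).1.1 ∧ p.2 ∈ (A t).1.2).card : ℝ) :=
          Finset.sum_le_sum (fun p _ => hpt p)
      _ = ε * ∑ p : (Fin m → Fin n → Bool) × (Fin m → Fin n → Bool),
            ((Finset.univ.filter fun t : Fin N =>
              p.1 ∈ (A t).1.1 ∧ p.2 ∈ (A t).1.2).card : ℝ) := by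
          rw [Finset.mul_sum]
      _ = ε * ∑ t : Fin N, ((A t).1.1.card : ℝ) * ((A t).1.2.card : ℝ) := by rw [hcovR]
  -- Step C : large rectangles have many bad instances
  have hlarge : ∀ t : Fin N, D ≤ ((A t).1.1.card : ℝ) → D ≤ ((A t).1.2.card : ℝ) →
      θ * θ * (((A t).1.1.card : ℝ) * ((A t).1.2.card : ℝ)) ≤
        ((Finset.univ.filter fun p : (Fin m → Fin n → Bool) × (Fin m → Fin n → Bool) =>
          (p.1 ∈ (A t).1.1 ∧ p.2 ∈ (A t).1.2) ∧
            ¬ ∀ i j : Fin m, (A t).2 ≠ fun u => Bool.xor (p.1 i u) (p.2 j u)).card : ℝ) := by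
    intro t hX hY
    have hPX := spread n m hn2 hm4 (A t).1.1 (by rw [hDdef, hKdef] at hX; exact hX)
    have hPY := spread n m hn2 hm4 (A t).1.2 (by rw [hDdef, hKdef] at hY; exact hY)
    set P : Finset (Fin n → Bool) := Finset.univ.filter fun v : Fin n → Bool =>
      (2:ℝ) ^ (1 - 5*(n:ℝ)/2) * ((A t).1.1.card : ℝ) ≤
        (((A t).1.1.filter fun X => ∃ i, X i = v).card : ℝ) with hPdef
    set Q : Finset (Fin n → Bool) := Finset.univ.filter fun v : Fin n → Bool =>
      (2:ℝ) ^ (1 - 5*(n:ℝ)/2) * ((A t).1.2.card : ℝ) ≤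
        (((A t).1.2.filter fun X => ∃ i, X i = v).card : ℝ) with hQdef
    set shift : (Fin n → Bool) → (Fin n → Bool) := fun w => fun u => Bool.xor (w u) ((A t).2 u)
      with hshiftdef
    have hshift_inj : Function.Injective shift := by
      intro a b hab
      funext u
      have h := congrFun hab u
      have hgen : ∀ x y c : Bool, Bool.xor x c = Bool.xor y c → x = y := by decide
      exact hgen _ _ _ h
    have hQ' : 2^(n-1) < (Q.image shift).card := by
      rw [Finset.card_image_of_injective _ hshift_inj]
      exact hPY
    have hcap : (P ∩ Q.image shift).Nonempty := by
      rw [← Finset.card_pos]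
      have hiu := Finset.card_inter_add_card_union P (Q.image shift)
      have huniv : (P ∪ Q.image shift).card ≤ 2^n := by
        calc (P ∪ Q.image shift).card ≤ (Finset.univ : Finset (Fin n → Bool)).card :=
            Finset.card_le_card (Finset.subset_univ _)
          _ = 2^n := by simp
      have hpow : 2^(n-1) + 2^(n-1) = 2^n := by
        rw [← two_mul, ← pow_succ']
        congr 1
        omega
      omega
    obtain ⟨v, hv⟩ := hcap
    have hvP : v ∈ P := (Finset.mem_inter.mp hv).1
    obtain ⟨w, hwQ, hwv⟩ := Finset.mem_image.mp (Finset.mem_inter.mp hv).2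
    -- the product of heavy fibers consists of bad covered instances
    have hsub : ((A t).1.1.filter fun X => ∃ i, X i = v) ×ˢ
        ((A t).1.2.filter fun Y => ∃ j, Y j = w)
        ⊆ Finset.univ.filter fun p : (Fin m → Fin n → Bool) × (Fin m → Fin n → Bool) =>
          (p.1 ∈ (A t).1.1 ∧ p.2 ∈ (A t).1.2) ∧
            ¬ ∀ i j : Fin m, (A t).2 ≠ fun u => Bool.xor (p.1 i u) (p.2 j u) := by
      intro p hp
      rw [Finset.mem_product] at hp
      obtain ⟨hp1, hp2⟩ := hp
      obtain ⟨hX1, i, hi⟩ := Finset.mem_filter.mp hp1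
      obtain ⟨hY1, j, hj⟩ := Finset.mem_filter.mp hp2
      refine Finset.mem_filter.mpr ⟨Finset.mem_univ _, ⟨hX1, hY1⟩, ?_⟩
      push_neg
      refine ⟨i, j, ?_⟩
      funext u
      rw [hi, hj]
      have hvu : v u = Bool.xor (w u) ((A t).2 u) := (congrFun hwv u).symm
      rw [hvu]
      cases w u <;> cases (A t).2 u <;> rfl
    have hcardprod : (((A t).1.1.filter fun X => ∃ i, X i = v).card : ℝ) *
        (((A t).1.2.filter fun Y => ∃ j, Y j = w).card : ℝ)
        ≤ ((Finset.univ.filter fun p : (Fin m → Fin n → Bool) × (Fin m → Fin n → Bool) =>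
          (p.1 ∈ (A t).1.1 ∧ p.2 ∈ (A t).1.2) ∧
            ¬ ∀ i j : Fin m, (A t).2 ≠ fun u => Bool.xor (p.1 i u) (p.2 j u)).card : ℝ) := by
      have := Finset.card_le_card hsub
      rw [Finset.card_product] at this
      exact_mod_cast this
    have hvheavy : θ * ((A t).1.1.card : ℝ) ≤
        (((A t).1.1.filter fun X => ∃ i, X i = v).card : ℝ) := by
      have := (Finset.mem_filter.mp hvP).2
      rw [hθdef]
      exact this
    have hwheavy : θ * ((A t).1.2.card : ℝ) ≤
        (((A t).1.2.filter fun Y => ∃ j, Y j = w).card : ℝ) := by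
      have := (Finset.mem_filter.mp hwQ).2
      rw [hθdef]
      exact this
    calc θ * θ * (((A t).1.1.card : ℝ) * ((A t).1.2.card : ℝ))
        = (θ * ((A t).1.1.card : ℝ)) * (θ * ((A t).1.2.card : ℝ)) := by ring
      _ ≤ (((A t).1.1.filter fun X => ∃ i, X i = v).card : ℝ) *
          (((A t).1.2.filter fun Y => ∃ j, Y j = w).card : ℝ) := by
          apply mul_le_mul hvheavy hwheavy (by positivity) (by positivity)
      _ ≤ _ := hcardprod
  -- Final assembly
  have hcardle : ∀ s : Finset (Fin m → Fin n → Bool), (s.card : ℝ) ≤ K := by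
    intro s
    rw [hKcast]
    have : s.card ≤ 2^(n*m) := by
      calc s.card ≤ (Finset.univ : Finset (Fin m → Fin n → Bool)).card := Finset.card_le_univ s
        _ = 2^(n*m) := by rw [Finset.card_univ, cardT]
    exact_mod_cast this
  have hLbound : θ * θ * ∑ t ∈ (Finset.univ.filter fun t : Fin N =>
        D ≤ ((A t).1.1.card : ℝ) ∧ D ≤ ((A t).1.2.card : ℝ)),
        ((A t).1.1.card : ℝ) * ((A t).1.2.card : ℝ)
      ≤ ε * ∑ t : Fin N, ((A t).1.1.card : ℝ) * ((A t).1.2.card : ℝ) := by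
    rw [Finset.mul_sum]
    calc ∑ t ∈ (Finset.univ.filter fun t : Fin N =>
          D ≤ ((A t).1.1.card : ℝ) ∧ D ≤ ((A t).1.2.card : ℝ)),
          θ * θ * (((A t).1.1.card : ℝ) * ((A t).1.2.card : ℝ))
        ≤ ∑ t ∈ (Finset.univ.filter fun t : Fin N =>
            D ≤ ((A t).1.1.card : ℝ) ∧ D ≤ ((A t).1.2.card : ℝ)),
          ((Finset.univ.filter fun p : (Fin m → Fin n → Bool) × (Fin m → Fin n → Bool) =>
            (p.1 ∈ (A t).1.1 ∧ p.2 ∈ (A t).1.2) ∧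
              ¬ ∀ i j : Fin m, (A t).2 ≠ fun u => Bool.xor (p.1 i u) (p.2 j u)).card : ℝ) := by
          refine Finset.sum_le_sum (fun t ht => ?_)
          have hmem := (Finset.mem_filter.mp ht).2
          exact hlarge t hmem.1 hmem.2
      _ ≤ ∑ t : Fin N,
          ((Finset.univ.filter fun p : (Fin m → Fin n → Bool) × (Fin m → Fin n → Bool) =>
            (p.1 ∈ (A t).1.1 ∧ p.2 ∈ (A t).1.2) ∧
              ¬ ∀ i j : Fin m, (A t).2 ≠ fun u => Bool.xor (p.1 i u) (p.2 j u)).card : ℝ) :=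
          Finset.sum_le_sum_of_subset_of_nonneg (Finset.filter_subset _ _)
            (fun t _ _ => Nat.cast_nonneg _)
      _ ≤ ε * ∑ t : Fin N, ((A t).1.1.card : ℝ) * ((A t).1.2.card : ℝ) := hbadsum
  -- split the total sum
  have hsplitLS : ∑ t ∈ (Finset.univ.filter fun t : Fin N =>
        D ≤ ((A t).1.1.card : ℝ) ∧ D ≤ ((A t).1.2.card : ℝ)),
        ((A t).1.1.card : ℝ) * ((A t).1.2.card : ℝ)
      + ∑ t ∈ (Finset.univ.filter fun t : Fin N =>
        ¬ (D ≤ ((A t).1.1.card : ℝ) ∧ D ≤ ((A t).1.2.card : ℝ))),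
        ((A t).1.1.card : ℝ) * ((A t).1.2.card : ℝ)
      = ∑ t : Fin N, ((A t).1.1.card : ℝ) * ((A t).1.2.card : ℝ) :=
    Finset.sum_filter_add_sum_filter_not _ _ _
  have hLquarter : 4 * ∑ t ∈ (Finset.univ.filter fun t : Fin N =>
        D ≤ ((A t).1.1.card : ℝ) ∧ D ≤ ((A t).1.2.card : ℝ)),
        ((A t).1.1.card : ℝ) * ((A t).1.2.card : ℝ)
      ≤ ∑ t : Fin N, ((A t).1.1.card : ℝ) * ((A t).1.2.card : ℝ) := by
    rw [hθsq] at hLbound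
    have h := (mul_le_mul_iff_right₀ hε_pos).mp (by linarith :
      ε * (4 * ∑ t ∈ (Finset.univ.filter fun t : Fin N =>
        D ≤ ((A t).1.1.card : ℝ) ∧ D ≤ ((A t).1.2.card : ℝ)),
        ((A t).1.1.card : ℝ) * ((A t).1.2.card : ℝ))
      ≤ ε * ∑ t : Fin N, ((A t).1.1.card : ℝ) * ((A t).1.2.card : ℝ))
    linarith
  have hsmallsum : ∑ t ∈ (Finset.univ.filter fun t : Fin N =>
        ¬ (D ≤ ((A t).1.1.card : ℝ) ∧ D ≤ ((A t).1.2.card : ℝ))),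
        ((A t).1.1.card : ℝ) * ((A t).1.2.card : ℝ) ≤ (N : ℝ) * (D * K) := by
    have hsmall : ∀ t ∈ (Finset.univ.filter fun t : Fin N =>
        ¬ (D ≤ ((A t).1.1.card : ℝ) ∧ D ≤ ((A t).1.2.card : ℝ))),
        ((A t).1.1.card : ℝ) * ((A t).1.2.card : ℝ) ≤ D * K := by
      intro t ht
      have hnot := (Finset.mem_filter.mp ht).2
      rcases not_and_or.mp hnot with h1 | h2
      · have hXle : ((A t).1.1.card : ℝ) ≤ D := (lt_of_not_ge h1).le
        exact mul_le_mul hXle (hcardle _) (Nat.cast_nonneg _) hD_pos.le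
      · have hYle : ((A t).1.2.card : ℝ) ≤ D := (lt_of_not_ge h2).le
        calc ((A t).1.1.card : ℝ) * ((A t).1.2.card : ℝ) ≤ K * D :=
            mul_le_mul (hcardle _) hYle (Nat.cast_nonneg _) hK_pos.le
          _ = D * K := mul_comm _ _
    calc ∑ t ∈ (Finset.univ.filter fun t : Fin N =>
          ¬ (D ≤ ((A t).1.1.card : ℝ) ∧ D ≤ ((A t).1.2.card : ℝ))),
          ((A t).1.1.card : ℝ) * ((A t).1.2.card : ℝ)
        ≤ ((Finset.univ.filter fun t : Fin N =>
            ¬ (D ≤ ((A t).1.1.card : ℝ) ∧ D ≤ ((A t).1.2.card : ℝ))).card : ℝ) * (D * K) := by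
          have := Finset.sum_le_card_nsmul _ _ _ hsmall
          rwa [nsmul_eq_mul] at this
      _ ≤ (N : ℝ) * (D * K) := by
          apply mul_le_mul_of_nonneg_right _ (by positivity)
          have : (Finset.univ.filter fun t : Fin N =>
              ¬ (D ≤ ((A t).1.1.card : ℝ) ∧ D ≤ ((A t).1.2.card : ℝ))).card ≤ N := by
            calc _ ≤ (Finset.univ : Finset (Fin N)).card := Finset.card_filter_le _ _
              _ = N := by rw [Finset.card_univ, Fintype.card_fin]
          exact_mod_cast this
  -- conclude
  have hmain : (3/4) * (K * K) ≤ (N : ℝ) * (D * K) := by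
    nlinarith [hcoverA, hLquarter, hsplitLS, hsmallsum]
  have hx : D * K = ((2:ℝ)^(-(m:ℝ)/2 - 1)) * (K * K) := by rw [hDdef]; ring
  have h34 : (3/4 : ℝ) ≤ (N : ℝ) * (2:ℝ)^(-(m:ℝ)/2 - 1) := by
    rw [hx] at hmain
    have hKK : (0:ℝ) < K * K := by positivity
    have := le_of_mul_le_mul_right (by linarith : (3/4 : ℝ) * (K * K) ≤
      ((N : ℝ) * (2:ℝ)^(-(m:ℝ)/2 - 1)) * (K * K)) hKK
    linarith
  have hxy : (2:ℝ)^(-(m:ℝ)/2 - 1) * (2:ℝ)^((m:ℝ)/2 + 1) = 1 := by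
    rw [← Real.rpow_add two_pos, show (-(m:ℝ)/2 - 1) + ((m:ℝ)/2 + 1) = 0 by ring,
      Real.rpow_zero]
  have hy_pos : (0:ℝ) < (2:ℝ)^((m:ℝ)/2 + 1) := Real.rpow_pos_of_pos two_pos _
  have hNge : (3/4 : ℝ) * (2:ℝ)^((m:ℝ)/2 + 1) ≤ (N : ℝ) := by
    have := mul_le_mul_of_nonneg_right h34 hy_pos.le
    rw [mul_assoc, hxy, mul_one] at this
    linarith
  have hsplitpow : (2:ℝ)^((m:ℝ)/2 + 1) = (2:ℝ)^((m:ℝ)/2) * 2 := by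
    rw [Real.rpow_add two_pos, Real.rpow_one]
  have hpos : (0:ℝ) < (2:ℝ)^((m:ℝ)/2) := Real.rpow_pos_of_pos two_pos _
  rw [hsplitpow] at hNge
  linarith
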